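/- arXiv:1804.05793 — 8 statements merged into one kernel-verified Lean document; each statement's English description precedes it below -/
import Mathlib

section
/- Deciding whether a given graph is a half-square of a balanced bisplit bipartite graph is NP-complete: the problem 'Edge Clique Cover' reduces to it in polynomial time. Specifically, for a connected graph G = (V, E_G) with no universal vertex and k ≤ |E_G|, let G' be obtained from G by adding k new universal vertices U (forming a clique joined completely to V). Then the edges of G can be covered by k cliques if and only if G' is a half-square of a balanced bisplit bipartite graph. -/
/-- The half-square of a bipartite graph given by an incidence relation `E : X → Y → Prop`:
two distinct vertices of `X` are adjacent iff they have a common neighbor in `Y`. -/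
def halfSquare {X Y : Type*} (E : X → Y → Prop) : SimpleGraph X where
  Adj u v := u ≠ v ∧ ∃ y, E u y ∧ E v y
  symm := by
    constructor
    rintro u v ⟨h, y, hu, hv⟩
    exact ⟨h.symm, y, hv, hu⟩
  loopless := by
    constructor
    rintro u ⟨h, -⟩
    exact h rfl

/-- `C` is a maximal clique of `G`. -/
def MaximalClique {V : Type*} (G : SimpleGraph V) (C : Set V) : Prop :=
  G.IsClique C ∧ ∀ D, G.IsClique D → C ⊆ D → D = C

/-- `G'` obtained from `G` by adding `k` new universal vertices: the new vertices form a
clique and are joined to all old vertices. -/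
def addUniversal {V : Type*} (G : SimpleGraph V) (k : ℕ) : SimpleGraph (V ⊕ Fin k) where
  Adj a b := a ≠ b ∧ ∀ u v, a = Sum.inl u → b = Sum.inl v → G.Adj u v
  symm := by
    constructor
    rintro a b ⟨hab, h⟩
    exact ⟨hab.symm, fun u v hb ha => (h v u ha hb).symm⟩
  loopless := by
    constructor
    rintro a ⟨h, -⟩
    exact h rfl

/-- A bipartite graph (given by incidence relation `E : X → Y → Prop`) is balanced bisplit:
`|X| = |Y|`, there is `X₁ ⊆ X` completely joined to `Y`, and the edges between
`X₂ = X \ X₁` and `Y₂ = Y \ Y₁` form a perfect matching of `X₂` onto `Y₂`. -/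
def IsBalancedBisplit {X Y : Type*} [Fintype X] [Fintype Y] (E : X → Y → Prop) : Prop :=
  Fintype.card X = Fintype.card Y ∧
  ∃ (X₁ : Set X) (Y₁ : Set Y),
    (∀ x ∈ X₁, ∀ y, E x y) ∧
    ∃ f : {x // x ∉ X₁} → {y // y ∉ Y₁}, Function.Bijective f ∧
      ∀ (x : {x // x ∉ X₁}) (y : {y // y ∉ Y₁}), (E x.val y.val ↔ f x = y)

/--  is a half-square of some balanced bisplit bipartite graph. -/
def IsHalfSquareOfBalancedBisplit {V : Type} [Fintype V] (G : SimpleGraph V) : Prop :=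
  ∃ (W : Type) (iW : Fintype W) (E : V → W → Prop),
    @IsBalancedBisplit V W inferInstance iW E ∧ halfSquare E = G

section Aux

variable {V : Type} {k : ℕ}

/-- Incidence relation for the forward construction. -/
def bbE (Q : Fin k → Set V) : (V ⊕ Fin k) → (Fin k ⊕ V) → Prop
  | Sum.inr _, _ => True
  | Sum.inl v, Sum.inl i => v ∈ Q i
  | Sum.inl v, Sum.inr w => v = w

/-- The matching for the forward construction. -/
def bbF : {x : V ⊕ Fin k // x ∉ Set.range (Sum.inr : Fin k → V ⊕ Fin k)} →
    {y : Fin k ⊕ V // y ∉ Set.range (Sum.inl : Fin k → Fin k ⊕ V)}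
  | ⟨Sum.inl v, _⟩ => ⟨Sum.inr v, by rintro ⟨i, h⟩; cases h⟩
  | ⟨Sum.inr i, h⟩ => absurd ⟨i, rfl⟩ h

/-- Inverse of `bbF`. -/
def bbG : {y : Fin k ⊕ V // y ∉ Set.range (Sum.inl : Fin k → Fin k ⊕ V)} →
    {x : V ⊕ Fin k // x ∉ Set.range (Sum.inr : Fin k → V ⊕ Fin k)}
  | ⟨Sum.inr v, _⟩ => ⟨Sum.inl v, by rintro ⟨i, h⟩; cases h⟩
  | ⟨Sum.inl i, h⟩ => absurd ⟨i, rfl⟩ h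

lemma bbF_bij : Function.Bijective (bbF (V := V) (k := k)) := by
  refine Function.bijective_iff_has_inverse.mpr ⟨bbG, ?_, ?_⟩
  · rintro ⟨(v | i), hx⟩
    · rfl
    · exact absurd ⟨i, rfl⟩ hx
  · rintro ⟨(i | v), hy⟩
    · exact absurd ⟨i, rfl⟩ hy
    · rfl

end Aux

/-- The hardness reduction: for a connected graph `G` with no universal vertex and
`k ≤ |E_G|`, the edges of `G` can be covered by `k` cliques iff the graph `G'`
obtained by adding `k` new universal vertices is a half-square of a balanced bisplit
bipartite graph. -/

theorem stmt_2 {V : Type} [Fintype V] (G : SimpleGraph V) [DecidableRel G.Adj] (k : ℕ)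
    (hconn : G.Connected)
    (huniv : ¬ ∃ v : V, ∀ u, u ≠ v → G.Adj v u)
    (hk : k ≤ G.edgeFinset.card) :
    (∃ Q : Fin k → Set V, (∀ i, G.IsClique (Q i)) ∧
        ∀ u v, G.Adj u v → ∃ i, u ∈ Q i ∧ v ∈ Q i) ↔
    IsHalfSquareOfBalancedBisplit (addUniversal G k) := by
  classical
  have hVne : Nonempty V := hconn.nonempty
  obtain ⟨v₀⟩ := hVne
  constructor
  · rintro ⟨Q, hclq, hcov⟩
    refine ⟨Fin k ⊕ V, inferInstance, bbE Q, ⟨?_, ?_⟩, ?_⟩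
    · simp [Fintype.card_sum, Nat.add_comm]
    · refine ⟨Set.range Sum.inr, Set.range Sum.inl, ?_, bbF, bbF_bij, ?_⟩
      · rintro x ⟨i, rfl⟩ y; trivial
      · rintro ⟨(v | i), hx⟩ ⟨(j | w), hy⟩
        · exact absurd ⟨j, rfl⟩ hy
        · show v = w ↔ _
          simp [bbF, Subtype.ext_iff]
        · exact absurd ⟨i, rfl⟩ hx
        · exact absurd ⟨i, rfl⟩ hx
    · ext a b
      show (a ≠ b ∧ ∃ y, bbE Q a y ∧ bbE Q b y) ↔ _
      show _ ↔ (a ≠ b ∧ ∀ u v, a = Sum.inl u → b = Sum.inl v → G.Adj u v)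
      rcases a with u | i
      · rcases b with v | j
        · constructor
          · rintro ⟨hne, y, hu, hv⟩
            have huv : u ≠ v := fun h => hne (by rw [h])
            refine ⟨hne, ?_⟩
            rintro u' v' h1 h2
            cases h1; cases h2
            rcases y with i | w
            · exact hclq i hu hv huv
            · exact absurd (hu.trans hv.symm) huv
          · rintro ⟨hne, h⟩
            have hadj : G.Adj u v := h u v rfl rfl
            obtain ⟨i, hui, hvi⟩ := hcov u v hadj
            exact ⟨hne, Sum.inl i, hui, hvi⟩
        · constructor
          · rintro ⟨hne, -⟩
            exact ⟨hne, by rintro u' v' h1 h2; cases h2⟩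
          · rintro ⟨hne, -⟩
            exact ⟨hne, Sum.inr u, rfl, trivial⟩
      · constructor
        · rintro ⟨hne, -⟩
          exact ⟨hne, by rintro u' v' h1 h2; cases h1⟩
        · rintro ⟨hne, -⟩
          rcases b with v | j
          · exact ⟨hne, Sum.inr v, trivial, rfl⟩
          · exact ⟨hne, Sum.inr v₀, trivial, trivial⟩
  · rintro ⟨W, iW, E, ⟨hcard, X₁, Y₁, hX₁, f, hfbij, hfE⟩, hEq⟩
    -- adjacency transfer
    have hAdj : ∀ a b, (a ≠ b ∧ ∃ y, E a y ∧ E b y) ↔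
        (addUniversal G k).Adj a b := by
      intro a b; rw [← hEq]; rfl
    -- every vertex of X has a neighbor in Y
    have hY_ne : Nonempty W := by
      have hpos : 0 < Fintype.card W := by
        rw [← hcard, Fintype.card_sum]
        have : 0 < Fintype.card V := Fintype.card_pos_iff.mpr ⟨v₀⟩
        omega
      exact Fintype.card_pos_iff.mp hpos
    have hnbr : ∀ a : V ⊕ Fin k, ∃ y, E a y := by
      intro a
      by_cases ha : a ∈ X₁
      · obtain ⟨y⟩ := hY_ne
        exact ⟨y, hX₁ a ha y⟩
      · exact ⟨(f ⟨a, ha⟩).1, (hfE ⟨a, ha⟩ (f ⟨a, ha⟩)).mpr rfl⟩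
    -- X₁ vertices are universal in the half-square, hence not of the form inl v
    have hX₁r : ∀ x ∈ X₁, ∃ i, x = Sum.inr i := by
      intro x hx
      rcases x with v | i
      · exfalso
        apply huniv
        refine ⟨v, fun u hu => ?_⟩
        have hne : (Sum.inl v : V ⊕ Fin k) ≠ Sum.inl u := by
          intro h; exact hu.symm (Sum.inl.inj h)
        obtain ⟨y, hy⟩ := hnbr (Sum.inl u)
        have := (hAdj (Sum.inl v) (Sum.inl u)).mp ⟨hne, y, hX₁ _ hx y, hy⟩
        exact this.2 v u rfl rfl
      · exact ⟨i, rfl⟩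
    have hinlX₂ : ∀ v : V, (Sum.inl v : V ⊕ Fin k) ∉ X₁ := by
      intro v hv
      obtain ⟨i, hi⟩ := hX₁r _ hv
      cases hi
    -- counting: card Y₁ ≤ k
    have hgX : ∃ g : {x // x ∈ X₁} → Fin k, Function.Injective g := by
      refine ⟨fun x => (hX₁r x.1 x.2).choose, ?_⟩
      intro a b hab
      apply Subtype.ext
      rw [(hX₁r a.1 a.2).choose_spec, (hX₁r b.1 b.2).choose_spec]
      exact congrArg Sum.inr hab
    obtain ⟨g, hg⟩ := hgX
    have hcX₁ : Fintype.card {x // x ∈ X₁} ≤ k := by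
      have := Fintype.card_le_of_injective g hg
      simpa using this
    have hcX₂ : Fintype.card {x // x ∉ X₁} =
        Fintype.card (V ⊕ Fin k) - Fintype.card {x // x ∈ X₁} :=
      Fintype.card_subtype_compl _
    have hcY₂ : Fintype.card {y // y ∉ Y₁} =
        Fintype.card W - Fintype.card {y // y ∈ Y₁} :=
      Fintype.card_subtype_compl _
    have hfcard : Fintype.card {x // x ∉ X₁} = Fintype.card {y // y ∉ Y₁} :=
      Fintype.card_of_bijective hfbij
    have hleX : Fintype.card {x // x ∈ X₁} ≤ Fintype.card (V ⊕ Fin k) :=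
      Fintype.card_subtype_le _
    have hleY : Fintype.card {y // y ∈ Y₁} ≤ Fintype.card W :=
      Fintype.card_subtype_le _
    have hcY₁ : Fintype.card {y // y ∈ Y₁} ≤ k := by omega
    obtain ⟨ι⟩ : Nonempty ({y // y ∈ Y₁} ↪ Fin k) := by
      apply Function.Embedding.nonempty_of_card_le
      simpa using hcY₁
    -- every G-edge has a common neighbor in Y₁
    have hedge : ∀ u v : V, G.Adj u v → ∃ y ∈ Y₁, E (Sum.inl u) y ∧ E (Sum.inl v) y := by
      intro u v hadj
      have hne : (Sum.inl u : V ⊕ Fin k) ≠ Sum.inl v := by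
        intro h; exact hadj.ne (Sum.inl.inj h)
      have : (addUniversal G k).Adj (Sum.inl u) (Sum.inl v) := by
        refine ⟨hne, ?_⟩
        rintro u' v' h1 h2; cases h1; cases h2; exact hadj
      obtain ⟨-, y, hu, hv⟩ := (hAdj (Sum.inl u) (Sum.inl v)).mpr this
      by_cases hy : y ∈ Y₁
      · exact ⟨y, hy, hu, hv⟩
      · exfalso
        have h1 := (hfE ⟨Sum.inl u, hinlX₂ u⟩ ⟨y, hy⟩).mp hu
        have h2 := (hfE ⟨Sum.inl v, hinlX₂ v⟩ ⟨y, hy⟩).mp hv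
        have := hfbij.injective (h1.trans h2.symm)
        exact hne (congrArg Subtype.val this)
    refine ⟨fun i => {v : V | ∃ (y : W) (hy : y ∈ Y₁), ι ⟨y, hy⟩ = i ∧ E (Sum.inl v) y},
      ?_, ?_⟩
    · intro i u hu v hv huv
      obtain ⟨y, hy, hyi, hEu⟩ := hu
      obtain ⟨y', hy', hyi', hEv⟩ := hv
      have : y = y' := by
        have := ι.injective (hyi.trans hyi'.symm)
        exact congrArg Subtype.val this
      subst this
      have hne : (Sum.inl u : V ⊕ Fin k) ≠ Sum.inl v := by
        intro h; exact huv (Sum.inl.inj h)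
      have := (hAdj (Sum.inl u) (Sum.inl v)).mp ⟨hne, y, hEu, hEv⟩
      exact this.2 u v rfl rfl
    · intro u v hadj
      obtain ⟨y, hy, hu, hv⟩ := hedge u v hadj
      exact ⟨ι ⟨y, hy⟩, ⟨y, hy, rfl, hu⟩, ⟨y, hy, rfl, hv⟩⟩
end

section
/- If B = (X, Y, E_B) is a star convex bipartite graph with associated star centered at x₀ ∈ X, then in the half-square B²[Y]: the set Y₀ = {y ∈ Y : x₀ ∈ N(y)} is a clique, and the set Y₁ = Y \ Y₀ partitions into cliques N(x) ∩ Y₁ over x ∈ N(Y₁), with vertices in distinct such cliques nonadjacent in B²[Y]. Consequently B²[Y] is obtained from a split graph by substituting vertices by cliques. -/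
/-- `E : X → Y → Prop` is star convex with respect to the star on `X` centered at `x₀`:
every neighborhood `N(y)` with at least two vertices contains the center `x₀`
(equivalently, `N(y)` induces a substar of the star centered at `x₀`). -/
def IsStarConvex {X Y : Type*} (E : X → Y → Prop) (x₀ : X) : Prop :=
  ∀ y x x', E x y → E x' y → x ≠ x' → E x₀ y

/-- A split graph: the vertex set partitions into a clique and a stable set. -/
def IsSplitGraph {A : Type*} (S : SimpleGraph A) : Prop :=
  ∃ K : Set A, S.IsClique K ∧ ∀ a ∉ K, ∀ b ∉ K, ¬ S.Adj a b

/-- `G` is obtained from `S` by substituting each vertex `a` of `S` by the (nonempty)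
clique `f ⁻¹ {a}`: distinct vertices of `G` are adjacent iff they lie in the same
substituted clique or their images are adjacent in `S`. -/
def ObtainedBySubstCliques {V A : Type*} (G : SimpleGraph V) (S : SimpleGraph A) : Prop :=
  ∃ f : V → A, Function.Surjective f ∧
    ∀ u v, u ≠ v → (G.Adj u v ↔ (f u = f v ∨ S.Adj (f u) (f v)))

open Classical in
noncomputable def hsRep {X Y : Type} (E : X → Y → Prop) (x₀ : X) (x : X) (d : Y) : Y :=
  if hx : ∃ y', E x y' ∧ ¬ E x₀ y' then hx.choose else d

open Classical in
noncomputable def hsF {X Y : Type} (E : X → Y → Prop) (x₀ : X) (y : Y) : Y :=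
  if hy : ¬ E x₀ y ∧ ∃ x, E x y then hsRep E x₀ hy.2.choose y else y

lemma hsF_spec {X Y : Type} {E : X → Y → Prop} {x₀ : X} (h : IsStarConvex E x₀)
    {x : X} {y : Y} (h0 : ¬ E x₀ y) (hx : E x y) :
    E x (hsF E x₀ y) ∧ ¬ E x₀ (hsF E x₀ y) ∧
      ∀ y', ¬ E x₀ y' → E x y' → hsF E x₀ y' = hsF E x₀ y := by
  have key : ∀ (z : Y) (a b : X), E a z → E b z → ¬ E x₀ z → a = b := by
    intro z a b ha hb hz
    by_contra hne
    exact hz (h z a b ha hb hne)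
  have main : ∀ y', ¬ E x₀ y' → E x y' →
      hsF E x₀ y' = hsRep E x₀ x y' := by
    intro y' h0' hx'
    have hy : ¬ E x₀ y' ∧ ∃ x, E x y' := ⟨h0', x, hx'⟩
    have hxeq : hy.2.choose = x := key y' hy.2.choose x hy.2.choose_spec hx' h0'
    rw [hsF, dif_pos hy, hxeq]
  have hex : ∃ y', E x y' ∧ ¬ E x₀ y' := ⟨y, hx, h0⟩
  have hrep : ∀ d : Y, hsRep E x₀ x d = hex.choose := by
    intro d; rw [hsRep, dif_pos hex]
  have hfy : hsF E x₀ y = hex.choose := (main y h0 hx).trans (hrep y)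
  refine ⟨?_, ?_, ?_⟩
  · rw [hfy]; exact hex.choose_spec.1
  · rw [hfy]; exact hex.choose_spec.2
  · intro y' h0' hx'
    rw [hfy, (main y' h0' hx').trans (hrep y')]

lemma hsF_fix₀ {X Y : Type} {E : X → Y → Prop} {x₀ : X} {y : Y} (h0 : E x₀ y) :
    hsF E x₀ y = y := by
  rw [hsF, dif_neg]
  intro hy
  exact hy.1 h0

lemma hsF_fix_iso {X Y : Type} {E : X → Y → Prop} {x₀ : X} {y : Y}
    (hiso : ¬ ∃ x, E x y) : hsF E x₀ y = y := by
  rw [hsF, dif_neg]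
  intro hy
  exact hiso hy.2

lemma hsF_idem {X Y : Type} {E : X → Y → Prop} {x₀ : X} (h : IsStarConvex E x₀) (y : Y) :
    hsF E x₀ (hsF E x₀ y) = hsF E x₀ y := by
  by_cases h0 : E x₀ y
  · rw [hsF_fix₀ h0, hsF_fix₀ h0]
  · by_cases hex : ∃ x, E x y
    · obtain ⟨x, hx⟩ := hex
      obtain ⟨h1, h2, h3⟩ := hsF_spec h h0 hx
      exact h3 _ h2 h1
    · rw [hsF_fix_iso hex, hsF_fix_iso hex]

/-- If `B = (X, Y, E)` is star convex with star centered at `x₀ ∈ X`, then in the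
half-square `B²[Y]`: the set `Y₀ = N(x₀)` is a clique; for each `x`, the set
`N(x) ∩ Y₁` (where `Y₁ = Y \ Y₀`) is a clique; vertices of `Y₁` belonging to such sets
for distinct `x`'s are nonadjacent; and consequently `B²[Y]` is obtained from a split
graph by substituting vertices by cliques. -/
theorem stmt_7 {X Y : Type} (E : X → Y → Prop) (x₀ : X) (h : IsStarConvex E x₀) :
    (halfSquare (Function.swap E)).IsClique {y | E x₀ y} ∧
    (∀ x : X, (halfSquare (Function.swap E)).IsClique {y | E x y ∧ ¬ E x₀ y}) ∧
    (∀ x x' : X, x ≠ x' → ∀ y y' : Y, E x y → ¬ E x₀ y → E x' y' → ¬ E x₀ y' →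
      ¬ (halfSquare (Function.swap E)).Adj y y') ∧
    (∃ (A : Type) (S : SimpleGraph A), IsSplitGraph S ∧
      ObtainedBySubstCliques (halfSquare (Function.swap E)) S) := by
  classical
  have key : ∀ (z : Y) (a b : X), E a z → E b z → ¬ E x₀ z → a = b := by
    intro z a b ha hb hz
    by_contra hne
    exact hz (h z a b ha hb hne)
  have transfer : ∀ (x : X) (u : Y), E x (hsF E x₀ u) → E x u := by
    intro x u hxfu
    by_cases h0 : E x₀ u
    · rwa [hsF_fix₀ h0] at hxfu
    · by_cases hex : ∃ x', E x' u
      · obtain ⟨x', hx'⟩ := hex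
        obtain ⟨h1, h2, _⟩ := hsF_spec h h0 hx'
        have hxx : x = x' := key (hsF E x₀ u) x x' hxfu h1 h2
        rwa [hxx]
      · rw [hsF_fix_iso hex] at hxfu
        exact absurd ⟨x, hxfu⟩ hex
  refine ⟨?_, ?_, ?_, ?_⟩
  · intro y hy y' hy' hne
    exact ⟨hne, x₀, hy, hy'⟩
  · intro x y hy y' hy' hne
    exact ⟨hne, x, hy.1, hy'.1⟩
  · rintro x x' hxx' y y' hxy h0y hx'y' h0y' ⟨hne, z, hzy, hzy'⟩
    exact hxx' ((key y x z hxy hzy h0y).trans (key y' z x' hzy' hx'y' h0y'))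
  · refine ⟨{y : Y // hsF E x₀ y = y},
      (halfSquare (Function.swap E)).comap Subtype.val, ?_, ?_⟩
    · -- split graph
      refine ⟨{a | E x₀ a.1}, ?_, ?_⟩
      · intro a ha b hb hne
        exact ⟨fun hv => hne (Subtype.ext hv), x₀, ha, hb⟩
      · rintro a ha b hb ⟨hne, x, hxa, hxb⟩
        obtain ⟨_, _, h3⟩ := hsF_spec h ha hxa
        have hba : hsF E x₀ b.1 = hsF E x₀ a.1 := h3 b.1 hb hxb
        exact hne (congrArg Subtype.val
          (Subtype.ext (((b.2.symm.trans hba).trans a.2).symm)))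
    · refine ⟨fun y => ⟨hsF E x₀ y, hsF_idem h y⟩, fun a => ⟨a.1, Subtype.ext a.2⟩, ?_⟩
      intro u v huv
      constructor
      · rintro ⟨-, x, hxu, hxv⟩
        by_cases h0u : E x₀ u <;> by_cases h0v : E x₀ v
        · refine Or.inr ?_
          show (halfSquare (Function.swap E)).Adj (hsF E x₀ u) (hsF E x₀ v)
          rw [hsF_fix₀ h0u, hsF_fix₀ h0v]
          exact ⟨huv, x, hxu, hxv⟩
        · obtain ⟨h1, h2, _⟩ := hsF_spec h h0v hxv
          refine Or.inr ?_
          show (halfSquare (Function.swap E)).Adj (hsF E x₀ u) (hsF E x₀ v)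
          rw [hsF_fix₀ h0u]
          exact ⟨fun hv => h2 (hv ▸ h0u), x, hxu, h1⟩
        · obtain ⟨h1, h2, _⟩ := hsF_spec h h0u hxu
          refine Or.inr ?_
          show (halfSquare (Function.swap E)).Adj (hsF E x₀ u) (hsF E x₀ v)
          rw [hsF_fix₀ h0v]
          exact ⟨fun hv => h2 (hv.symm ▸ h0v), x, h1, hxv⟩
        · obtain ⟨_, _, h3⟩ := hsF_spec h h0v hxv
          exact Or.inl (Subtype.ext (h3 u h0u hxu))
      · rintro (heq | hadj)
        · have hfeq : hsF E x₀ u = hsF E x₀ v := congrArg Subtype.val heq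
          by_cases h0u : E x₀ u
          · exfalso
            have hu : hsF E x₀ u = u := hsF_fix₀ h0u
            by_cases h0v : E x₀ v
            · exact huv ((hu.symm.trans hfeq).trans (hsF_fix₀ h0v))
            · by_cases hex : ∃ x, E x v
              · obtain ⟨x, hx⟩ := hex
                obtain ⟨_, h2, _⟩ := hsF_spec h h0v hx
                rw [← hfeq, hu] at h2
                exact h2 h0u
              · exact huv ((hu.symm.trans hfeq).trans (hsF_fix_iso hex))
          · by_cases hexu : ∃ x, E x u
            · obtain ⟨x, hx⟩ := hexu
              obtain ⟨h1, h2, _⟩ := hsF_spec h h0u hx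
              rw [hfeq] at h1
              exact ⟨huv, x, hx, transfer x v h1⟩
            · exfalso
              have hu : hsF E x₀ u = u := hsF_fix_iso hexu
              by_cases h0v : E x₀ v
              · exact huv ((hu.symm.trans hfeq).trans (hsF_fix₀ h0v))
              · by_cases hexv : ∃ x, E x v
                · obtain ⟨x, hx⟩ := hexv
                  obtain ⟨h1, _, _⟩ := hsF_spec h h0v hx
                  rw [← hfeq, hu] at h1
                  exact hexu ⟨x, h1⟩
                · exact huv ((hu.symm.trans hfeq).trans (hsF_fix_iso hexv))
        · obtain ⟨hne, x, hxu, hxv⟩ :=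
            (show (halfSquare (Function.swap E)).Adj (hsF E x₀ u) (hsF E x₀ v) from hadj)
          exact ⟨huv, x, transfer x u hxu, transfer x v hxv⟩
end

section
/- Every split graph is a half-square of a star convex bipartite graph. Concretely, if G = (V, E_G) is a split graph with V = Q ∪ S, Q a clique and S a stable set, then the bipartite graph H = (X, V, E_H) with X = {x₀} ∪ {x_s : s ∈ S}, where x₀ is adjacent to all of Q, and each x_s is adjacent to s and to N_G(s) ∩ Q, satisfies G = H²[V], and H is star convex with star on X centered at x₀. -/
/-- The incidence relation of the bipartite graph `H = (X, V, E_H)` with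
`X = {x₀} ∪ {x_s : s ∈ S}` (encoded as `Option S` with `x₀ = none`): `x₀` is adjacent
to all of `Q`, and each `x_s` is adjacent to `s` and to `N_G(s) ∩ Q`. -/
def splitRel {V : Type} (G : SimpleGraph V) (Q S : Set V) : V → Option S → Prop :=
  fun v x => match x with
    | none => v ∈ Q
    | some s => v = s.val ∨ (v ∈ Q ∧ G.Adj s.val v)

/-- Every split graph is a half-square of a star convex bipartite graph: for a split
graph `G` with clique `Q` and stable set `S`, the bipartite graph `H` above satisfies
`G = H²[V]` and is star convex with star on `X` centered at `x₀`. -/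
theorem stmt_9 {V : Type} (G : SimpleGraph V) (Q S : Set V)
    (hpart : ∀ v, v ∈ Q ↔ v ∉ S)
    (hQ : G.IsClique Q)
    (hS : ∀ a ∈ S, ∀ b ∈ S, ¬ G.Adj a b) :
    halfSquare (splitRel G Q S) = G ∧
    IsStarConvex (Function.swap (splitRel G Q S)) (none : Option S) := by
  constructor
  · ext u v
    constructor
    · rintro ⟨hne, x, hu, hv⟩
      match x with
      | none => exact hQ hu hv hne
      | some s =>
        rcases hu with rfl | ⟨huQ, hsu⟩
        · rcases hv with h | ⟨hvQ, hsv⟩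
          · exact absurd h.symm hne
          · exact hsv
        · rcases hv with rfl | ⟨hvQ, hsv⟩
          · exact hsu.symm
          · exact hQ huQ hvQ hne
    · intro hadj
      refine ⟨hadj.ne, ?_⟩
      by_cases huS : u ∈ S
      · exact ⟨some ⟨u, huS⟩, Or.inl rfl, Or.inr ⟨(hpart v).mpr
          (fun hvS => hS u huS v hvS hadj), hadj⟩⟩
      · by_cases hvS : v ∈ S
        · exact ⟨some ⟨v, hvS⟩, Or.inr ⟨(hpart u).mpr huS, hadj.symm⟩, Or.inl rfl⟩
        · exact ⟨none, (hpart u).mpr huS, (hpart v).mpr hvS⟩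
  · intro v x x' hx hx' hne
    match x, x' with
    | none, _ => exact hx
    | _, none => exact hx'
    | some s, some s' =>
      rcases hx with rfl | ⟨hQv, _⟩
      · rcases hx' with h | ⟨hQv, _⟩
        · exact absurd (by simp [Subtype.ext_iff, h]) hne
        · exact hQv
      · exact hQv
end

section
/- Every graph obtained from a split graph by substituting vertices by cliques is a half-square of a star convex bipartite graph. -/
/-- Every graph obtained from a split graph by substituting vertices by cliques is a
half-square of a star convex bipartite graph. -/
theorem stmt_10 {V : Type} (G : SimpleGraph V)
    (h : ∃ (A : Type) (S : SimpleGraph A), IsSplitGraph S ∧ ObtainedBySubstCliques G S) :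
    ∃ (W : Type) (E : V → W → Prop) (w₀ : W),
      IsStarConvex (Function.swap E) w₀ ∧ halfSquare E = G := by
  obtain ⟨A, S, ⟨K, hK, hStab⟩, f, -, hG⟩ := h
  refine ⟨Option {a : A // a ∉ K},
    fun v w => match w with
      | none => f v ∈ K
      | some a => f v = a.1 ∨ (f v ∈ K ∧ S.Adj (f v) a.1),
    none, ?_, ?_⟩
  · rintro v (_ | a) (_ | b) hv hv' hne
    · exact absurd rfl hne
    · exact hv
    · exact hv'
    · rcases hv with hva | ⟨hvK, _⟩
      · rcases hv' with hvb | ⟨hvK, _⟩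
        · exact absurd (congrArg some (Subtype.ext (hva.symm.trans hvb))) hne
        · exact hvK
      · exact hvK
  · ext u v
    constructor
    · rintro ⟨hne, w, hu, hv⟩
      rw [hG u v hne]
      match w with
      | none =>
        by_cases hfe : f u = f v
        · exact Or.inl hfe
        · exact Or.inr (hK hu hv hfe)
      | some a =>
        rcases hu with hu | ⟨huK, hua⟩
        · rcases hv with hv | ⟨hvK, hva⟩
          · exact Or.inl (hu.trans hv.symm)
          · exact Or.inr (hu ▸ hva.symm)
        · rcases hv with hv | ⟨hvK, hva⟩
          · exact Or.inr (hv ▸ hua)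
          · by_cases hfe : f u = f v
            · exact Or.inl hfe
            · exact Or.inr (hK huK hvK hfe)
    · intro hadj
      have hne := hadj.ne
      refine ⟨hne, ?_⟩
      rcases (hG u v hne).mp hadj with hfe | hS
      · by_cases hu : f u ∈ K
        · exact ⟨none, hu, show f v ∈ K from hfe ▸ hu⟩
        · exact ⟨some ⟨f u, hu⟩, Or.inl rfl, Or.inl hfe.symm⟩
      · by_cases hu : f u ∈ K
        · by_cases hv : f v ∈ K
          · exact ⟨none, hu, hv⟩
          · exact ⟨some ⟨f v, hv⟩, Or.inr ⟨hu, hS⟩, Or.inl rfl⟩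
        · by_cases hv : f v ∈ K
          · exact ⟨some ⟨f u, hu⟩, Or.inl rfl, Or.inr ⟨hv, hS.symm⟩⟩
          · exact absurd hS (hStab _ hu _ hv)
end

section
/- A graph G is a half-square of a star convex bipartite graph if and only if either (i) G has at most one connected component with at least two vertices and that component has a universal vertex, or (ii) G is obtained from a split graph by substituting vertices by cliques. -/
/-- `G` is a half-square of a star convex bipartite graph (the star may be on either
color class). -/
def IsHalfSquareOfStarConvex {V : Type} (G : SimpleGraph V) : Prop :=
  ∃ (W : Type) (E : V → W → Prop),
    ((∃ u : V, IsStarConvex E u) ∨ (∃ w₀ : W, IsStarConvex (Function.swap E) w₀)) ∧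
    halfSquare E = G

lemma halfSquare_adj {X Y : Type*} (E : X → Y → Prop) {u v : X} :
    (halfSquare E).Adj u v ↔ u ≠ v ∧ ∃ y, E u y ∧ E v y := Iff.rfl

lemma aux_right {V W : Type} (E : V → W → Prop) (w₀ : W)
    (hw : ∀ (x : V) (y y' : W), E x y → E x y' → y ≠ y' → E x w₀) :
    ∃ (A : Type) (S : SimpleGraph A), IsSplitGraph S ∧
      ObtainedBySubstCliques (halfSquare E) S := by
  classical
  set f0 : V → V ⊕ W := fun v =>
    if h : ¬ E v w₀ ∧ ∃ y, E v y then Sum.inr h.2.choose else Sum.inl v with hf0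
  have hUniq : ∀ v, ¬ E v w₀ → ∀ y y', E v y → E v y' → y = y' := by
    intro v hv y y' h h'
    by_contra hne
    exact hv (hw v y y' h h' hne)
  have hinr : ∀ v y, f0 v = Sum.inr y → E v y ∧ ¬ E v w₀ := by
    intro v y hv
    by_cases h : ¬ E v w₀ ∧ ∃ y, E v y
    · simp only [hf0] at hv
      rw [dif_pos h] at hv
      cases hv
      exact ⟨h.2.choose_spec, h.1⟩
    · simp only [hf0] at hv
      rw [dif_neg h] at hv
      exact absurd hv (by simp)
  have hinl : ∀ v x, f0 v = Sum.inl x → v = x := by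
    intro v x hv
    by_cases h : ¬ E v w₀ ∧ ∃ y, E v y
    · simp only [hf0] at hv
      rw [dif_pos h] at hv
      exact absurd hv (by simp)
    · simp only [hf0] at hv
      rw [dif_neg h] at hv
      injection hv
  have hval : ∀ v y, ¬ E v w₀ → E v y → f0 v = Sum.inr y := by
    intro v y h1 h2
    have hc : ¬ E v w₀ ∧ ∃ y, E v y := ⟨h1, y, h2⟩
    simp only [hf0]
    rw [dif_pos hc]
    exact congrArg Sum.inr (hUniq v h1 _ y hc.2.choose_spec h2)
  have L0 : ∀ u u' y₀, f0 u = f0 u' → E u' y₀ → E u y₀ := by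
    intro u u' y₀ h hE
    rcases heq : f0 u' with x | y
    · rw [heq] at h
      have h1 := hinl u' x heq
      have h2 := hinl u x h
      rw [h2, ← h1]; exact hE
    · rw [heq] at h
      obtain ⟨hE', hnK'⟩ := hinr u' y heq
      have hy : y₀ = y := hUniq u' hnK' y₀ y hE hE'
      obtain ⟨hEu, _⟩ := hinr u y h
      rw [hy]; exact hEu
  have L1 : ∀ u v, f0 u = f0 v → u ≠ v → (halfSquare E).Adj u v := by
    intro u v h hne
    rcases heq : f0 v with x | y
    · rw [heq] at h
      exact absurd ((hinl u x h).trans (hinl v x heq).symm) hne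
    · rw [heq] at h
      exact ⟨hne, y, (hinr u y h).1, (hinr v y heq).1⟩
  refine ⟨{a : V ⊕ W // ∃ v, f0 v = a},
    { Adj := fun a b => a ≠ b ∧ ∃ u v, f0 u = a.1 ∧ f0 v = b.1 ∧ (halfSquare E).Adj u v
      symm := by
        constructor
        rintro a b ⟨hne, u, v, h1, h2, h⟩
        exact ⟨hne.symm, v, u, h2, h1, h.symm⟩
      loopless := by constructor; rintro a ⟨hne, -⟩; exact hne rfl }, ?_, ?_⟩
  · refine ⟨{a | ∃ v, f0 v = a.1 ∧ E v w₀}, ?_, ?_⟩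
    · rintro a ⟨u, hu, hKu⟩ b ⟨v, hv, hKv⟩ hab
      have huv : u ≠ v := by
        rintro rfl
        exact hab (Subtype.ext (hu.symm.trans hv))
      exact ⟨hab, u, v, hu, hv, huv, w₀, hKu, hKv⟩
    · rintro a ha b hb ⟨hab, u, v, hu, hv, huv, y₀, hEu, hEv⟩
      have hnu : ¬ E u w₀ := fun h => ha ⟨u, hu, h⟩
      have hnv : ¬ E v w₀ := fun h => hb ⟨v, hv, h⟩
      have h1 : a.1 = Sum.inr y₀ := hu ▸ hval u y₀ hnu hEu
      have h2 : b.1 = Sum.inr y₀ := hv ▸ hval v y₀ hnv hEv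
      exact hab (Subtype.ext (h1.trans h2.symm))
  · refine ⟨fun v => ⟨f0 v, v, rfl⟩, ?_, ?_⟩
    · rintro ⟨a, v, hv⟩
      exact ⟨v, Subtype.ext hv⟩
    · intro u v huv
      constructor
      · intro h
        by_cases hfe : f0 u = f0 v
        · exact Or.inl (Subtype.ext hfe)
        · exact Or.inr ⟨fun he => hfe (congrArg Subtype.val he), u, v, rfl, rfl, h⟩
      · rintro (h | ⟨hne', u', v', h1, h2, hne'', y₀, hEu', hEv'⟩)
        · exact L1 u v (congrArg Subtype.val h) huv
        · exact ⟨huv, y₀, L0 u u' y₀ h1.symm hEu', L0 v v' y₀ h2.symm hEv'⟩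

lemma aux_rev_ii {V A : Type} (G : SimpleGraph V) (S : SimpleGraph A)
    (hsplit : IsSplitGraph S) (hsub : ObtainedBySubstCliques G S) :
    ∃ (W : Type) (E : V → W → Prop),
      ((∃ u : V, IsStarConvex E u) ∨ (∃ w₀ : W, IsStarConvex (Function.swap E) w₀)) ∧
      halfSquare E = G := by
  obtain ⟨K, hK, hstable⟩ := hsplit
  obtain ⟨f, hf, hadj⟩ := hsub
  refine ⟨Option A,
    fun v o => o.elim (f v ∈ K) (fun a => f v = a ∨ (f v ∈ K ∧ S.Adj (f v) a)), ?_, ?_⟩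
  · right
    refine ⟨none, ?_⟩
    intro v o o' h h' hne
    by_cases hvK : f v ∈ K
    · exact hvK
    · exfalso
      have ho : o = some (f v) := by
        cases o with
        | none => exact absurd h hvK
        | some a =>
          rcases h with h | h
          · rw [h]
          · exact absurd h.1 hvK
      have ho' : o' = some (f v) := by
        cases o' with
        | none => exact absurd h' hvK
        | some a =>
          rcases h' with h' | h'
          · rw [h']
          · exact absurd h'.1 hvK
      exact hne (ho.trans ho'.symm)
  · ext u v
    rw [halfSquare_adj]
    constructor
    · rintro ⟨huv, o, h1, h2⟩
      refine (hadj u v huv).2 ?_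
      cases o with
      | none =>
        by_cases hfe : f u = f v
        · exact Or.inl hfe
        · exact Or.inr (hK h1 h2 hfe)
      | some a =>
        rcases h1 with h1 | h1
        · rcases h2 with h2 | h2
          · exact Or.inl (h1.trans h2.symm)
          · exact Or.inr (h1 ▸ h2.2.symm)
        · rcases h2 with h2 | h2
          · exact Or.inr (h2 ▸ h1.2)
          · by_cases hfe : f u = f v
            · exact Or.inl hfe
            · exact Or.inr (hK h1.1 h2.1 hfe)
    · intro h
      have huv := h.ne
      rcases (hadj u v huv).1 h with heq | hadjS
      · exact ⟨huv, some (f u), Or.inl rfl, Or.inl heq.symm⟩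
      · by_cases hu : f u ∈ K
        · exact ⟨huv, some (f v), Or.inr ⟨hu, hadjS⟩, Or.inl rfl⟩
        · have hv : f v ∈ K := by
            by_contra hv
            exact hstable _ hu _ hv hadjS
          exact ⟨huv, some (f u), Or.inl rfl, Or.inr ⟨hv, hadjS.symm⟩⟩

lemma aux_rev_i {V : Type} (G : SimpleGraph V)
    (huniv : (∃ u v, G.Adj u v) → ∃ u, ∀ v, v ≠ u → (∃ w, G.Adj v w) → G.Adj u v) :
    ∃ (W : Type) (E : V → W → Prop),
      ((∃ u : V, IsStarConvex E u) ∨ (∃ w₀ : W, IsStarConvex (Function.swap E) w₀)) ∧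
      halfSquare E = G := by
  by_cases hE : ∃ u v, G.Adj u v
  · obtain ⟨u₀, hu₀⟩ := huniv hE
    refine ⟨V × V, fun x y => G.Adj y.1 y.2 ∧ (x = y.1 ∨ x = y.2 ∨ x = u₀), ?_, ?_⟩
    · exact Or.inl ⟨u₀, fun y x x' hx _ _ => ⟨hx.1, Or.inr (Or.inr rfl)⟩⟩
    · have h1 : ∀ p q x, G.Adj p q → (x = p ∨ x = q ∨ x = u₀) → x ≠ u₀ → G.Adj u₀ x := by
        rintro p q x hpq (rfl | rfl | rfl) hne
        · exact hu₀ x hne ⟨q, hpq⟩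
        · exact hu₀ x hne ⟨p, hpq.symm⟩
        · exact absurd rfl hne
      ext a b
      rw [halfSquare_adj]
      constructor
      · rintro ⟨hab, ⟨p, q⟩, ⟨hpq, hA⟩, ⟨-, hB⟩⟩
        by_cases ha : a = u₀
        · subst ha
          exact h1 p q b hpq hB (Ne.symm hab)
        · by_cases hb : b = u₀
          · subst hb
            exact (h1 p q a hpq hA ha).symm
          · rcases hA with rfl | rfl | rfl
            · rcases hB with h' | rfl | rfl
              · exact absurd h'.symm hab
              · exact hpq
              · exact absurd rfl hb
            · rcases hB with rfl | h' | rfl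
              · exact hpq.symm
              · exact absurd h'.symm hab
              · exact absurd rfl hb
            · exact absurd rfl ha
      · intro h
        exact ⟨h.ne, (a, b), ⟨h, Or.inl rfl⟩, ⟨h, Or.inr (Or.inl rfl)⟩⟩
  · refine ⟨PUnit, fun _ _ => False, Or.inr ⟨PUnit.unit, fun y x x' h => h.elim⟩, ?_⟩
    ext a b
    rw [halfSquare_adj]
    constructor
    · rintro ⟨-, y, h, -⟩
      exact h.elim
    · intro h
      exact absurd ⟨a, b, h⟩ hE

/-- A graph is a half-square of a star convex bipartite graph iff either (i) it has at
most one connected component with at least two vertices and that component has a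
universal vertex, or (ii) it is obtained from a split graph by substituting vertices
by cliques. -/
theorem stmt_11 {V : Type} (G : SimpleGraph V) :
    IsHalfSquareOfStarConvex G ↔
    (((∀ u v u' v', G.Adj u u' → G.Adj v v' → G.Reachable u v) ∧
        ((∃ u v, G.Adj u v) → ∃ u, ∀ v, v ≠ u → (∃ w, G.Adj v w) → G.Adj u v)) ∨
      (∃ (A : Type) (S : SimpleGraph A), IsSplitGraph S ∧ ObtainedBySubstCliques G S)) := by
  constructor
  · rintro ⟨W, E, hstar, rfl⟩
    rcases hstar with ⟨u₀, hu₀⟩ | ⟨w₀, hw₀⟩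
    · left
      have hr : ∀ a b, (halfSquare E).Adj a b → (halfSquare E).Reachable a u₀ := by
        rintro a b ⟨hab, y, ha, hb⟩
        by_cases h : a = u₀
        · exact h ▸ SimpleGraph.Reachable.refl a
        · exact SimpleGraph.Adj.reachable ⟨h, y, ha, hu₀ y a b ha hb hab⟩
      constructor
      · intro u v u' v' h1 h2
        exact (hr u u' h1).trans (hr v v' h2).symm
      · intro _
        refine ⟨u₀, fun v hv hw => ?_⟩
        obtain ⟨w, hvw⟩ := hw
        obtain ⟨hvw', y, h1, h2⟩ := hvw
        exact ⟨Ne.symm hv, y, hu₀ y v w h1 h2 hvw', h1⟩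
    · right
      exact aux_right E w₀ hw₀
  · rintro (⟨-, huniv⟩ | ⟨A, S, hsplit, hsub⟩)
    · exact aux_rev_i G huniv
    · exact aux_rev_ii G S hsplit hsub
end

section
/- Half-squares of biconvex bipartite graphs are K_{1,3}-free: if B = (X, Y, E_B) is a biconvex bipartite graph, then B²[X] (and by symmetry B²[Y]) contains no induced K_{1,3} (claw). Equivalently, a biconvex bipartite graph contains no induced subdivision of K_{1,3}, and an induced claw in B²[X] would yield such a subdivision in B. -/
/-- `E : X → Y → Prop` is convex with respect to the linear order `le` on `X`:
each neighborhood `N(y)` is an interval of `X`. -/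
def ConvexIn {X Y : Type*} (le : X → X → Prop) (E : X → Y → Prop) : Prop :=
  IsLinearOrder X le ∧
  ∀ y x₁ x₂ x₃, le x₁ x₂ → le x₂ x₃ → E x₁ y → E x₃ y → E x₂ y

/-- `G` contains no induced `K_{1,3}` (claw): there is no vertex `c` with three pairwise
distinct, pairwise nonadjacent neighbors. -/
def ClawFree {V : Type*} (G : SimpleGraph V) : Prop :=
  ∀ c a b d : V, a ≠ b → a ≠ d → b ≠ d →
    G.Adj c a → G.Adj c b → G.Adj c d →
    ¬ G.Adj a b → ¬ G.Adj a d → ¬ G.Adj b d → False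

lemma clawFree_of_convexIn {X Y : Type} (E : X → Y → Prop) (le : X → X → Prop)
    (h : ConvexIn le E) : ClawFree (halfSquare E) := by
  obtain ⟨hlin, hconv⟩ := h
  have tot : ∀ u v, le u v ∨ le v u := fun u v => hlin.toTotal.total u v
  intro c a b d hab had hbd hca hcb hcd nab nad nbd
  obtain ⟨-, ya, hcya, haya⟩ := hca
  obtain ⟨-, yb, hcyb, hbyb⟩ := hcb
  obtain ⟨-, yd, hcyd, hdyd⟩ := hcd
  have key : ∀ (p q : X) (y : Y), q ≠ p → E c y → E p y →
      ((le c q ∧ le q p) ∨ (le p q ∧ le q c)) → (halfSquare E).Adj q p := by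
    rintro p q y hne hcy hpy (⟨h1, h2⟩ | ⟨h1, h2⟩)
    · exact ⟨hne, y, hconv y c q p h1 h2 hcy hpy, hpy⟩
    · exact ⟨hne, y, hconv y p q c h1 h2 hpy hcy, hpy⟩
  have solve : ∀ (u m v : X) (yu yv : Y), m ≠ u → m ≠ v → E u yu → E v yv →
      E c yu → E c yv → ¬(halfSquare E).Adj m u → ¬(halfSquare E).Adj m v →
      le u m → le m v → False := by
    intro u m v yu yv hmu hmv hu hv hcu hcv nmu nmv h1 h2
    rcases tot c m with h | h
    · exact nmv (key v m yv hmv hcv hv (Or.inl ⟨h, h2⟩))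
    · exact nmu (key u m yu hmu hcu hu (Or.inr ⟨h1, h⟩))
  have nba : ¬(halfSquare E).Adj b a := fun h => nab h.symm
  have nda : ¬(halfSquare E).Adj d a := fun h => nad h.symm
  have ndb : ¬(halfSquare E).Adj d b := fun h => nbd h.symm
  rcases tot a b with h1 | h1 <;> rcases tot a d with h2 | h2 <;> rcases tot b d with h3 | h3
  · exact solve a b d ya yd hab.symm hbd haya hdyd hcya hcyd nba nbd h1 h3
  · exact solve a d b ya yb had.symm hbd.symm haya hbyb hcya hcyb nda ndb h2 h3
  · exact solve a b d ya yd hab.symm hbd haya hdyd hcya hcyd nba nbd h1 h3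
  · exact solve d a b yd yb had hab hdyd hbyb hcyd hcyb nad nab h2 h1
  · exact solve b a d yb yd hab had hbyb hdyd hcyb hcyd nab nad h1 h2
  · exact solve b a d yb yd hab had hbyb hdyd hcyb hcyd nab nad h1 h2
  · exact solve b d a yb ya hbd.symm had.symm hbyb haya hcyb hcya ndb nda h3 h2
  · exact solve d b a yd ya hbd hab.symm hdyd haya hcyd hcya nbd nba h3 h1

/-- Half-squares of biconvex bipartite graphs are `K_{1,3}`-free: if `E : X → Y → Prop`
is convex with respect to linear orders on both `X` and `Y`, then both half-squares
`B²[X]` and `B²[Y]` contain no induced claw. -/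
theorem stmt_13 {X Y : Type} (E : X → Y → Prop)
    (leX : X → X → Prop) (leY : Y → Y → Prop)
    (hX : ConvexIn leX E) (hY : ConvexIn leY (Function.swap E)) :
    ClawFree (halfSquare E) ∧ ClawFree (halfSquare (Function.swap E)) := by
  exact ⟨clawFree_of_convexIn E leX hX, clawFree_of_convexIn (Function.swap E) leY hY⟩
end

section
/- Every interval graph is a half-square of a convex bipartite graph: if G = (V, E_G) is an interval graph with maximal cliques linearly ordered as Q₁, …, Q_q such that each vertex belongs to a consecutive set of cliques, then the vertex-clique incidence bipartite graph B = (V, 𝒞(G), E_B) is 𝒞(G)-convex and G = B²[V]. -/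
lemma exists_maximalClique {V : Type*} (G : SimpleGraph V) {u v : V} (h : G.Adj u v) :
    ∃ C, MaximalClique G C ∧ u ∈ C ∧ v ∈ C := by
  set S : Set (Set V) := {C | G.IsClique C ∧ u ∈ C ∧ v ∈ C} with hS
  have h0 : ({u, v} : Set V) ∈ S := by
    refine ⟨?_, by simp, by simp⟩
    rw [SimpleGraph.isClique_iff]
    exact Set.pairwise_pair.2 fun _ => ⟨h, h.symm⟩
  have Hc : ∀ c ⊆ S, IsChain (· ⊆ ·) c → c.Nonempty → ∃ ub ∈ S, ∀ s ∈ c, s ⊆ ub := by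
    rintro c hcS hchain ⟨s, hs⟩
    refine ⟨⋃₀ c, ⟨?_, Set.mem_sUnion_of_mem (hcS hs).2.1 hs,
      Set.mem_sUnion_of_mem (hcS hs).2.2 hs⟩, fun t ht => Set.subset_sUnion_of_mem ht⟩
    rintro x ⟨a, ha, hxa⟩ y ⟨b, hb, hyb⟩ hxy
    rcases hchain.total ha hb with hab | hba
    · exact (hcS hb).1 (hab hxa) hyb hxy
    · exact (hcS ha).1 hxa (hba hyb) hxy
  obtain ⟨m, _, hm⟩ := zorn_subset_nonempty S Hc _ h0
  refine ⟨m, ⟨hm.prop.1, ?_⟩, hm.prop.2.1, hm.prop.2.2⟩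
  intro D hD hsub
  exact Set.Subset.antisymm (hm.2 ⟨hD, hsub hm.prop.2.1, hsub hm.prop.2.2⟩ hsub) hsub

/-- Every interval graph is a half-square of a convex bipartite graph: if the maximal
cliques of `G` can be enumerated as `Q 0, …, Q (q-1)` so that each vertex lies in a
consecutive set of cliques, then the vertex-clique incidence bipartite graph of `G` is
convex with respect to the clique class and `G = B²[V]`. -/
theorem stmt_15 {V : Type} [Fintype V] (G : SimpleGraph V) (q : ℕ) (Q : Fin q → Set V)
    (hmax : ∀ i, MaximalClique G (Q i))
    (hall : ∀ C, MaximalClique G C → ∃! i, Q i = C)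
    (hconsec : ∀ v : V, ∀ i j l : Fin q, i ≤ j → j ≤ l → v ∈ Q i → v ∈ Q l → v ∈ Q j) :
    ConvexIn (fun i j : Fin q => i ≤ j) (fun (i : Fin q) (v : V) => v ∈ Q i) ∧
    halfSquare (fun (v : V) (i : Fin q) => v ∈ Q i) = G := by
  constructor
  · exact ⟨inferInstance, fun v i j l hij hjl hi hl => hconsec v i j l hij hjl hi hl⟩
  · ext u v
    constructor
    · rintro ⟨hne, i, hu, hv⟩
      exact (hmax i).1 hu hv hne
    · intro hadj
      obtain ⟨C, hC, huC, hvC⟩ := exists_maximalClique G hadj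
      obtain ⟨i, hi, -⟩ := hall C hC
      exact ⟨hadj.ne, i, show u ∈ Q i from hi ▸ huC, show v ∈ Q i from hi ▸ hvC⟩
end

section
/- A graph is a half-square of a biconvex bipartite graph if and only if it is a unit interval graph. In particular, for a unit interval graph G, the vertex-clique incidence bipartite graph of G is biconvex: with the maximal cliques Q₁,…,Q_q in consecutive order and vertices sorted lexicographically by (ℓ(v), r(v)) where v belongs exactly to Q_{ℓ(v)},…,Q_{r(v)}, each clique's neighborhood is an interval of vertices. -/
/-- `G` is an interval graph: intersection graph of (nonempty) closed intervals
`[l v, r v]` on some linearly ordered set. -/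
def IsIntervalGraph {V : Type*} (G : SimpleGraph V) : Prop :=
  ∃ (L : Type) (le : L → L → Prop) (_ : IsLinearOrder L le) (l r : V → L),
    (∀ v, le (l v) (r v)) ∧
    ∀ u v, u ≠ v → (G.Adj u v ↔ (le (l u) (r v) ∧ le (l v) (r u)))

/-- A unit interval graph: a `K_{1,3}`-free interval graph. -/
def IsUnitIntervalGraph {V : Type*} (G : SimpleGraph V) : Prop :=
  IsIntervalGraph G ∧ ClawFree G

/-- `G` is a half-square of a biconvex bipartite graph. -/
def IsHalfSquareOfBiconvex {V : Type} (G : SimpleGraph V) : Prop :=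
  ∃ (W : Type) (E : V → W → Prop) (leV : V → V → Prop) (leW : W → W → Prop),
    ConvexIn leV E ∧ ConvexIn leW (Function.swap E) ∧ halfSquare E = G

def Umbrella {V : Type*} (le : V → V → Prop) (G : SimpleGraph V) : Prop :=
  ∀ u v w, le u v → le v w → G.Adj u w → v = u ∨ v = w ∨ (G.Adj u v ∧ G.Adj v w)

lemma finset_exists_max {α L : Type*} (le : L → L → Prop)
    (hto : ∀ a b, le a b ∨ le b a) (htr : ∀ {a b c}, le a b → le b c → le a c)
    (t : Finset α) (f : α → L) (hne : t.Nonempty) :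
    ∃ a ∈ t, ∀ b ∈ t, le (f b) (f a) := by
  classical
  induction t using Finset.induction with
  | empty => exact absurd hne (by simp)
  | @insert a s ha ih =>
    rcases s.eq_empty_or_nonempty with rfl | hs
    · exact ⟨a, by simp, by
        intro b hb
        simp only [Finset.mem_insert, Finset.notMem_empty, or_false] at hb
        subst hb
        rcases hto (f b) (f b) with h | h <;> exact h⟩
    · obtain ⟨m, hm, hmax⟩ := ih hs
      rcases hto (f a) (f m) with h | h
      · refine ⟨m, Finset.mem_insert_of_mem hm, ?_⟩
        intro b hb
        rcases Finset.mem_insert.mp hb with rfl | hb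
        · exact h
        · exact hmax b hb
      · refine ⟨a, Finset.mem_insert_self a s, ?_⟩
        intro b hb
        rcases Finset.mem_insert.mp hb with rfl | hb
        · rcases hto (f b) (f b) with h' | h' <;> exact h'
        · exact htr (hmax b hb) h

lemma set_exists_max {α L : Type*} (le : L → L → Prop)
    (hto : ∀ a b, le a b ∨ le b a) (htr : ∀ {a b c}, le a b → le b c → le a c)
    (s : Set α) (f : α → L) (hfin : s.Finite) (hne : s.Nonempty) :
    ∃ a ∈ s, ∀ b ∈ s, le (f b) (f a) := by
  obtain ⟨a, ha, hmax⟩ := finset_exists_max le hto htr hfin.toFinset f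
    (by rwa [Set.Finite.toFinset_nonempty])
  exact ⟨a, hfin.mem_toFinset.mp ha, fun b hb => hmax b (hfin.mem_toFinset.mpr hb)⟩

lemma set_exists_min {α L : Type*} (le : L → L → Prop)
    (hto : ∀ a b, le a b ∨ le b a) (htr : ∀ {a b c}, le a b → le b c → le a c)
    (s : Set α) (f : α → L) (hfin : s.Finite) (hne : s.Nonempty) :
    ∃ a ∈ s, ∀ b ∈ s, le (f a) (f b) := by
  exact set_exists_max (fun a b => le b a) (fun a b => (hto b a))
    (fun hab hbc => htr hbc hab) s f hfin hne



/-- three-level lexicographic order -/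
def lex3 {L : Type*} {V : Type*} (le : L → L → Prop) (f g : V → L) (ι : V → ℕ) (u v : V) : Prop :=
  (le (f u) (f v) ∧ f u ≠ f v) ∨
    (f u = f v ∧ ((le (g u) (g v) ∧ g u ≠ g v) ∨ (g u = g v ∧ ι u ≤ ι v)))

lemma lex3_isLinearOrder {L : Type*} {V : Type*} (le : L → L → Prop) (hlin : IsLinearOrder L le)
    (f g : V → L) (ι : V → ℕ) (hι : Function.Injective ι) :
    IsLinearOrder V (lex3 le f g ι) := by
  have hre : ∀ a : L, le a a := fun a => hlin.refl a
  have htr : ∀ {a b c : L}, le a b → le b c → le a c := fun h1 h2 => hlin.trans _ _ _ h1 h2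
  have han : ∀ {a b : L}, le a b → le b a → a = b := fun h1 h2 => hlin.antisymm _ _ h1 h2
  have hto : ∀ a b : L, le a b ∨ le b a := fun a b => hlin.total a b
  have slt_trans : ∀ {a b c : L}, (le a b ∧ a ≠ b) → (le b c ∧ b ≠ c) → (le a c ∧ a ≠ c) := by
    rintro a b c ⟨h1, h2⟩ ⟨h3, h4⟩
    refine ⟨htr h1 h3, fun h => ?_⟩
    subst h
    exact h2 (han h1 h3)
  refine { refl := ?_, trans := ?_, antisymm := ?_, total := ?_ }
  · intro a
    exact Or.inr ⟨rfl, Or.inr ⟨rfl, le_refl _⟩⟩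
  · rintro a b c (h1 | ⟨hf1, h1⟩) (h2 | ⟨hf2, h2⟩)
    · exact Or.inl (slt_trans h1 h2)
    · exact Or.inl (hf2 ▸ h1)
    · exact Or.inl (hf1 ▸ h2)
    · refine Or.inr ⟨hf1.trans hf2, ?_⟩
      rcases h1 with h1 | ⟨hg1, h1⟩ <;> rcases h2 with h2 | ⟨hg2, h2⟩
      · exact Or.inl (slt_trans h1 h2)
      · exact Or.inl (hg2 ▸ h1)
      · exact Or.inl (hg1 ▸ h2)
      · exact Or.inr ⟨hg1.trans hg2, h1.trans h2⟩
  · rintro a b (h1 | ⟨hf1, h1⟩) (h2 | ⟨hf2, h2⟩)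
    · exact absurd (han h1.1 h2.1) h1.2
    · exact absurd hf2.symm h1.2
    · exact absurd hf1.symm h2.2
    · rcases h1 with h1 | ⟨hg1, h1⟩ <;> rcases h2 with h2 | ⟨hg2, h2⟩
      · exact absurd (han h1.1 h2.1) h1.2
      · exact absurd hg2.symm h1.2
      · exact absurd hg1.symm h2.2
      · exact hι (le_antisymm h1 h2)
  · intro a b
    by_cases hf : f a = f b
    · by_cases hg : g a = g b
      · rcases Nat.le_total (ι a) (ι b) with h | h
        · exact Or.inl (Or.inr ⟨hf, Or.inr ⟨hg, h⟩⟩)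
        · exact Or.inr (Or.inr ⟨hf.symm, Or.inr ⟨hg.symm, h⟩⟩)
      · rcases hto (g a) (g b) with h | h
        · exact Or.inl (Or.inr ⟨hf, Or.inl ⟨h, hg⟩⟩)
        · exact Or.inr (Or.inr ⟨hf.symm, Or.inl ⟨h, fun hh => hg hh.symm⟩⟩)
    · rcases hto (f a) (f b) with h | h
      · exact Or.inl (Or.inl ⟨h, hf⟩)
      · exact Or.inr (Or.inl ⟨h, fun hh => hf hh.symm⟩)

lemma lex3_le_f {le : L → L → Prop} (hlin : IsLinearOrder L le) {f g : V → L} {ι : V → ℕ}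
    {u v : V} (h : lex3 le f g ι u v) : le (f u) (f v) := by
  rcases h with h | ⟨h, -⟩
  · exact h.1
  · exact h ▸ hlin.refl _

section UmbrellaConsequences
variable {V : Type} {G : SimpleGraph V} {le : V → V → Prop}

lemma umbrella_clawFree (hlin : IsLinearOrder V le) (hum : Umbrella le G) :
    ClawFree G := by
  have hto : ∀ a b : V, le a b ∨ le b a := fun a b => hlin.total a b
  -- two neighbors on the same (lower) side of c must be adjacent
  have sideL : ∀ x y c : V, G.Adj c x → G.Adj c y → x ≠ y → ¬G.Adj x y →
      le x c → le y c → False := by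
    intro x y c hcx hcy hxy hnxy hxc hyc
    rcases hto x y with h | h
    · rcases hum x y c h hyc hcx.symm with h' | h' | h'
      · exact hxy h'.symm
      · exact hcy.ne' h'
      · exact hnxy h'.1
    · rcases hum y x c h hxc hcy.symm with h' | h' | h'
      · exact hxy h'
      · exact hcx.ne' h'
      · exact hnxy h'.1.symm
  have sideR : ∀ x y c : V, G.Adj c x → G.Adj c y → x ≠ y → ¬G.Adj x y →
      le c x → le c y → False := by
    intro x y c hcx hcy hxy hnxy hcx' hcy'
    rcases hto x y with h | h
    · rcases hum c x y hcx' h hcy with h' | h' | h'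
      · exact hcx.ne h'.symm
      · exact hxy h'
      · exact hnxy h'.2
    · rcases hum c y x hcy' h hcx with h' | h' | h'
      · exact hcy.ne h'.symm
      · exact hxy h'.symm
      · exact hnxy h'.2.symm
  intro c a b d hab had hbd hca hcb hcd hnab hnad hnbd
  rcases hto a c with ha | ha <;> rcases hto b c with hb | hb <;> rcases hto d c with hd | hd
  · exact sideL a b c hca hcb hab hnab ha hb
  · exact sideL a b c hca hcb hab hnab ha hb
  · exact sideL a d c hca hcd had hnad ha hd
  · exact sideR b d c hcb hcd hbd hnbd hb hd
  · exact sideL b d c hcb hcd hbd hnbd hb hd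
  · exact sideR a d c hca hcd had hnad ha hd
  · exact sideR a b c hca hcb hab hnab ha hb
  · exact sideR a b c hca hcb hab hnab ha hb

/-- closed neighborhoods are intervals under an umbrella order -/
lemma umbrella_nbhd_interval (hlin : IsLinearOrder V le) (hum : Umbrella le G)
    {v x y z : V} (hxy : le x y) (hyz : le y z)
    (hx : x = v ∨ G.Adj v x) (hz : z = v ∨ G.Adj v z) : y = v ∨ G.Adj v y := by
  have han : ∀ {a b : V}, le a b → le b a → a = b := fun h1 h2 => hlin.antisymm _ _ h1 h2
  rcases hlin.total y v with h | h
  · rcases hx with rfl | hx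
    · exact Or.inl (han h hxy)
    · rcases hum x y v hxy h hx.symm with h' | h' | h'
      · exact Or.inr (h' ▸ hx)
      · exact Or.inl h'
      · exact Or.inr h'.2.symm
  · rcases hz with rfl | hz
    · exact Or.inl (han hyz h)
    · rcases hum v y z h hyz hz with h' | h' | h'
      · exact Or.inl h'
      · exact Or.inr (h' ▸ hz)
      · exact Or.inr h'.1

lemma umbrella_intervalGraph [Fintype V] (hlin : IsLinearOrder V le) (hum : Umbrella le G) :
    IsIntervalGraph G := by
  classical
  have hre : ∀ a : V, le a a := fun a => hlin.refl a
  have htr : ∀ {a b c : V}, le a b → le b c → le a c := fun h1 h2 => hlin.trans _ _ _ h1 h2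
  have han : ∀ {a b : V}, le a b → le b a → a = b := fun h1 h2 => hlin.antisymm _ _ h1 h2
  have hto : ∀ a b : V, le a b ∨ le b a := fun a b => hlin.total a b
  have hm : ∀ v : V, ∃ mv : V, (mv = v ∨ G.Adj v mv) ∧
      ∀ x, (x = v ∨ G.Adj v x) → le mv x := by
    intro v
    obtain ⟨a, ha, hmin⟩ := set_exists_min le hto htr {x | x = v ∨ G.Adj v x} id
      (Set.toFinite _) ⟨v, Or.inl rfl⟩
    exact ⟨a, ha, hmin⟩
  choose m hm1 hm2 using hm
  have hadj' : ∀ u v : V, u ≠ v → (G.Adj u v ↔ (le (m u) v ∧ le (m v) u)) := by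
    intro u v hne
    constructor
    · intro h
      exact ⟨hm2 u v (Or.inr h), hm2 v u (Or.inr h.symm)⟩
    · rintro ⟨h1, h2⟩
      rcases hto u v with h | h
      · rcases umbrella_nbhd_interval hlin hum h2 h (hm1 v) (Or.inl rfl) with h' | h'
        · exact absurd h' hne
        · exact h'.symm
      · rcases umbrella_nbhd_interval hlin hum h1 h (hm1 u) (Or.inl rfl) with h' | h'
        · exact absurd h'.symm hne
        · exact h'
  set rank : V → ℕ := fun v => {x | le x v ∧ x ≠ v}.ncard with hrank
  have rsub : ∀ {u v : V}, le u v → {x | le x u ∧ x ≠ u} ⊆ {x | le x v ∧ x ≠ v} := by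
    rintro u v h x ⟨h1, h2⟩
    refine ⟨htr h1 h, fun hx => ?_⟩
    subst hx
    exact h2 (han h1 h)
  have rmono : ∀ {u v : V}, le u v → rank u ≤ rank v := fun h =>
    Set.ncard_le_ncard (rsub h) (Set.toFinite _)
  have rstrict : ∀ {u v : V}, le u v → u ≠ v → rank u < rank v := by
    intro u v h hne
    refine Set.ncard_lt_ncard ?_ (Set.toFinite _)
    rw [Set.ssubset_iff_of_subset (rsub h)]
    exact ⟨u, ⟨h, hne⟩, fun hc => hc.2 rfl⟩
  have rrefl : ∀ {u v : V}, rank u ≤ rank v → le u v := by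
    intro u v h
    by_contra hc
    have h1 : le v u := (hto u v).resolve_left hc
    have h2 : v ≠ u := fun hh => hc (hh ▸ hre v)
    exact absurd h (Nat.not_le.mpr (rstrict h1 h2))
  refine ⟨ℕ, (· ≤ ·), inferInstance, fun v => 2 * rank (m v), fun v => 2 * rank v + 1, ?_, ?_⟩
  · intro v
    have := rmono (hm2 v v (Or.inl rfl))
    dsimp only
    omega
  · intro u v hne
    rw [hadj' u v hne]
    dsimp only
    constructor
    · rintro ⟨h1, h2⟩
      have := rmono h1; have := rmono h2; omega
    · rintro ⟨h1, h2⟩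
      exact ⟨rrefl (by omega), rrefl (by omega)⟩

lemma umbrella_halfSquare (hlin : IsLinearOrder V le) (hum : Umbrella le G) :
    IsHalfSquareOfBiconvex G := by
  have hre : ∀ a : V, le a a := fun a => hlin.refl a
  have htr : ∀ {a b c : V}, le a b → le b c → le a c := fun h1 h2 => hlin.trans _ _ _ h1 h2
  have hto : ∀ a b : V, le a b ∨ le b a := fun a b => hlin.total a b
  refine ⟨V, fun v w => le v w ∧ (v = w ∨ G.Adj v w), le, le, ⟨hlin, ?_⟩, ⟨hlin, ?_⟩, ?_⟩
  · rintro y x₁ x₂ x₃ h12 h23 ⟨ha1, hb1⟩ ⟨ha3, hb3⟩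
    refine ⟨htr h23 ha3, ?_⟩
    have := umbrella_nbhd_interval hlin hum h12 h23
      (hb1.imp id fun h => h.symm) (hb3.imp id fun h => h.symm)
    exact this.imp id fun h => h.symm
  · rintro y x₁ x₂ x₃ h12 h23 ⟨ha1, hb1⟩ ⟨ha3, hb3⟩
    refine ⟨htr ha1 h12, ?_⟩
    have := umbrella_nbhd_interval hlin hum h12 h23
      (hb1.imp Eq.symm id) (hb3.imp Eq.symm id)
    exact this.imp Eq.symm id
  · refine SimpleGraph.ext ?_
    funext u v
    refine propext ⟨?_, ?_⟩
    · rintro ⟨hne, y, ⟨hu, eu⟩, ⟨hv, ev⟩⟩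
      rcases eu with rfl | eu
      · rcases ev with rfl | ev
        · exact absurd rfl hne
        · exact ev.symm
      · rcases ev with rfl | ev
        · exact eu
        · rcases hto u v with h | h
          · rcases hum u v y h hv eu with h' | h' | h'
            · exact absurd h'.symm hne
            · exact h' ▸ eu
            · exact h'.1
          · rcases hum v u y h hu ev with h' | h' | h'
            · exact absurd h' hne
            · exact (h' ▸ ev).symm
            · exact h'.1.symm
    · intro h
      rcases hto u v with h' | h'
      · exact ⟨h.ne, v, ⟨h', Or.inr h⟩, ⟨hre v, Or.inl rfl⟩⟩
      · exact ⟨h.ne, u, ⟨hre u, Or.inl rfl⟩, ⟨h', Or.inr h.symm⟩⟩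

lemma halfSquare_to_umbrella (h : IsHalfSquareOfBiconvex G) :
    ∃ le : V → V → Prop, IsLinearOrder V le ∧ Umbrella le G := by
  obtain ⟨W, E, leV, leW, ⟨hlinV, hconv⟩, -, heq⟩ := h
  refine ⟨leV, hlinV, ?_⟩
  intro u v w huv hvw hadj
  by_cases h1 : v = u
  · exact Or.inl h1
  by_cases h2 : v = w
  · exact Or.inr (Or.inl h2)
  rw [← heq] at hadj
  obtain ⟨hne, y, hEu, hEw⟩ := hadj
  have hEv := hconv y u v w huv hvw hEu hEw
  refine Or.inr (Or.inr ⟨?_, ?_⟩) <;> rw [← heq]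
  · exact ⟨fun hh => h1 hh.symm, y, hEu, hEv⟩
  · exact ⟨h2, y, hEv, hEw⟩

lemma umbrella_part3 [Fintype V] (hlin : IsLinearOrder V le) (hum : Umbrella le G) :
    ∃ (leV : V → V → Prop)
      (leC : {C : Set V // MaximalClique G C} → {C : Set V // MaximalClique G C} → Prop),
      ConvexIn leV (fun (v : V) (C : {C : Set V // MaximalClique G C}) => v ∈ C.val) ∧
      ConvexIn leC
        (Function.swap (fun (v : V) (C : {C : Set V // MaximalClique G C}) => v ∈ C.val)) := by
  classical
  rcases isEmpty_or_nonempty V with hV | hV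
  · -- trivial orders on (almost) empty types
    have hCeq : ∀ C D : {C : Set V // MaximalClique G C}, C = D := by
      intro C D
      ext x
      exact (IsEmpty.false x).elim
    refine ⟨fun _ _ => True, fun _ _ => True, ⟨?_, ?_⟩, ⟨?_, ?_⟩⟩
    · refine { refl := ?_, trans := ?_, antisymm := ?_, total := ?_ }
      · exact fun a => True.intro
      · exact fun _ _ _ _ _ => True.intro
      · exact fun a => (IsEmpty.false a).elim
      · exact fun _ _ => Or.inl True.intro
    · intro y x₁ x₂ x₃ _ _ _ _
      exact (IsEmpty.false x₂).elim
    · refine { refl := ?_, trans := ?_, antisymm := ?_, total := ?_ }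
      · exact fun a => True.intro
      · exact fun _ _ _ _ _ => True.intro
      · exact fun a b _ _ => hCeq a b
      · exact fun _ _ => Or.inl True.intro
    · intro y x₁ x₂ x₃ _ _ _ _
      exact (IsEmpty.false y).elim
  have hre : ∀ a : V, le a a := fun a => hlin.refl a
  have htr : ∀ {a b c : V}, le a b → le b c → le a c := fun h1 h2 => hlin.trans _ _ _ h1 h2
  have han : ∀ {a b : V}, le a b → le b a → a = b := fun h1 h2 => hlin.antisymm _ _ h1 h2
  have hto : ∀ a b : V, le a b ∨ le b a := fun a b => hlin.total a b
  have hμ : ∀ C : Set V, ∃ x : V, MaximalClique G C → (x ∈ C ∧ ∀ y ∈ C, le x y) := by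
    intro C
    by_cases hC : MaximalClique G C
    · have hne : C.Nonempty := by
        by_contra hne
        rw [Set.not_nonempty_iff_eq_empty] at hne
        have := hC.2 {Classical.arbitrary V} (SimpleGraph.isClique_singleton _)
          (by rw [hne]; exact Set.empty_subset _)
        simp [hne] at this
      obtain ⟨x, hx, hmin⟩ := set_exists_min le hto htr C id (Set.toFinite _) hne
      exact ⟨x, fun _ => ⟨hx, hmin⟩⟩
    · exact ⟨Classical.arbitrary V, fun h => absurd h hC⟩
  have hν : ∀ C : Set V, ∃ x : V, MaximalClique G C → (x ∈ C ∧ ∀ y ∈ C, le y x) := by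
    intro C
    by_cases hC : MaximalClique G C
    · have hne : C.Nonempty := by
        by_contra hne
        rw [Set.not_nonempty_iff_eq_empty] at hne
        have := hC.2 {Classical.arbitrary V} (SimpleGraph.isClique_singleton _)
          (by rw [hne]; exact Set.empty_subset _)
        simp [hne] at this
      obtain ⟨x, hx, hmax⟩ := set_exists_max le hto htr C id (Set.toFinite _) hne
      exact ⟨x, fun _ => ⟨hx, hmax⟩⟩
    · exact ⟨Classical.arbitrary V, fun h => absurd h hC⟩
  choose μ hμ using hμ
  choose ν hν using hν
  -- maximal cliques are intervals
  have cliq_int : ∀ C : Set V, MaximalClique G C → ∀ x y z : V, x ∈ C → z ∈ C →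
      le x y → le y z → y ∈ C := by
    intro C hC x y z hx hz hxy hyz
    by_cases hyC : y ∈ C
    · exact hyC
    have key : ∀ c ∈ C, c ≠ y → G.Adj y c := by
      intro c hc hcy
      rcases hto c y with h | h
      · by_cases hcz : c = z
        · subst hcz
          exact absurd (han hyz h).symm hcy
        · rcases hum c y z h hyz (hC.1 hc hz hcz) with h' | h' | h'
          · exact absurd h'.symm hcy
          · exact absurd (h' ▸ hz) hyC
          · exact h'.1.symm
      · by_cases hxc : x = c
        · subst hxc
          exact absurd (han h hxy).symm hcy
        · rcases hum x y c hxy h (hC.1 hx hc hxc) with h' | h' | h'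
          · exact absurd (h' ▸ hx) hyC
          · exact absurd h'.symm hcy
          · exact h'.2
    have hclq : G.IsClique (insert y C) :=
      hC.1.insert (fun b hb hne => key b hb hne.symm)
    have := hC.2 (insert y C) hclq (Set.subset_insert y C)
    exact absurd (this ▸ Set.mem_insert y C) hyC
  have mono : ∀ C D : Set V, MaximalClique G C → MaximalClique G D →
      le (μ C) (μ D) → le (ν C) (ν D) := by
    intro C D hC hD h
    by_contra hn
    have h1 : le (ν D) (ν C) := (hto _ _).resolve_left hn
    have hsub : D ⊆ C := by
      intro y hy
      exact cliq_int C hC (μ C) y (ν C) (hμ C hC).1 (hν C hC).1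
        (htr h ((hμ D hD).2 y hy)) (htr ((hν D hD).2 y hy) h1)
    have := hD.2 C hC.1 hsub
    exact hn (this ▸ hre (ν D))
  refine ⟨le, fun C D => le (μ C.1) (μ D.1), ⟨hlin, ?_⟩, ⟨?_, ?_⟩⟩
  · intro C x₁ x₂ x₃ h12 h23 h1 h3
    exact cliq_int C.1 C.2 x₁ x₂ x₃ h1 h3 h12 h23
  · refine { refl := ?_, trans := ?_, antisymm := ?_, total := ?_ }
    · exact fun C => hre _
    · exact fun A B C h1 h2 => htr h1 h2
    swap
    · exact fun A B => hto _ _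
    intro A B h1 h2
    have hμeq : μ A.1 = μ B.1 := han h1 h2
    have hν1 : le (ν A.1) (ν B.1) := mono A.1 B.1 A.2 B.2 h1
    have hν2 : le (ν B.1) (ν A.1) := mono B.1 A.1 B.2 A.2 h2
    have hνeq : ν A.1 = ν B.1 := han hν1 hν2
    refine Subtype.ext (Set.Subset.antisymm ?_ ?_)
    · intro x hx
      exact cliq_int B.1 B.2 (μ B.1) x (ν B.1) (hμ B.1 B.2).1 (hν B.1 B.2).1
        (hμeq ▸ (hμ A.1 A.2).2 x hx) (hνeq ▸ (hν A.1 A.2).2 x hx)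
    · intro x hx
      exact cliq_int A.1 A.2 (μ A.1) x (ν A.1) (hμ A.1 A.2).1 (hν A.1 A.2).1
        (hμeq ▸ (hμ B.1 B.2).2 x hx) (hνeq ▸ (hν B.1 B.2).2 x hx)
  · intro v C₁ C₂ C₃ h12 h23 hv1 hv3
    exact cliq_int C₂.1 C₂.2 (μ C₂.1) v (ν C₂.1) (hμ C₂.1 C₂.2).1 (hν C₂.1 C₂.2).1
      (htr h23 ((hμ C₃.1 C₃.2).2 v hv3)) (htr ((hν C₁.1 C₁.2).2 v hv1) (mono C₁.1 C₂.1 C₁.2 C₂.2 h12))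

lemma unit_to_umbrella [Fintype V] (hint : IsIntervalGraph G) (hcf : ClawFree G) :
    ∃ le : V → V → Prop, IsLinearOrder V le ∧ Umbrella le G := by
  classical
  rcases isEmpty_or_nonempty V with hV | hV
  · refine ⟨fun _ _ => True, ?_, ?_⟩
    · refine { refl := ?_, trans := ?_, antisymm := ?_, total := ?_ }
      · exact fun a => True.intro
      · exact fun _ _ _ _ _ => True.intro
      · exact fun a => (IsEmpty.false a).elim
      · exact fun _ _ => Or.inl True.intro
    · intro u v w _ _ _
      exact (IsEmpty.false u).elim
  obtain ⟨L, le, hlinL, l, r, hlr, hadjL⟩ := hint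
  have hre : ∀ a : L, le a a := fun a => hlinL.refl a
  have htr : ∀ {a b c : L}, le a b → le b c → le a c := fun h1 h2 => hlinL.trans _ _ _ h1 h2
  have han : ∀ {a b : L}, le a b → le b a → a = b := fun h1 h2 => hlinL.antisymm _ _ h1 h2
  have hto : ∀ a b : L, le a b ∨ le b a := fun a b => hlinL.total a b
  -- every clique extends to a maximal clique
  have extend : ∀ s : Set V, G.IsClique s → ∃ C, MaximalClique G C ∧ s ⊆ C := by
    intro s hs
    obtain ⟨C, ⟨hC1, hC2⟩, hmax⟩ := set_exists_max (· ≤ · : ℕ → ℕ → Prop)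
      Nat.le_total (fun h1 h2 => le_trans h1 h2) {t : Set V | G.IsClique t ∧ s ⊆ t}
      Set.ncard (Set.toFinite _) ⟨s, hs, subset_rfl⟩
    refine ⟨C, ⟨hC1, ?_⟩, hC2⟩
    intro D hD hCD
    exact (Set.eq_of_subset_of_ncard_le hCD (hmax D ⟨hD, hC2.trans hCD⟩)
      (Set.toFinite _)).symm
  -- a common point of each (maximal) clique
  have hptE : ∀ C : Set V, ∃ p : L, G.IsClique C → ∀ v ∈ C, le (l v) p ∧ le p (r v) := by
    intro C
    by_cases hC : C.Nonempty
    · obtain ⟨v₀, hv₀, hmin⟩ := set_exists_min le hto htr C r (Set.toFinite _) hC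
      refine ⟨r v₀, fun hclq v hv => ⟨?_, hmin v hv⟩⟩
      by_cases hvv : v = v₀
      · exact hvv ▸ hlr v
      · exact ((hadjL v v₀ hvv).mp (hclq hv hv₀ hvv)).1
    · exact ⟨l (Classical.arbitrary V), fun hclq v hv => absurd (⟨v, hv⟩ : Set.Nonempty _) hC⟩
  choose pt hpt using hptE
  -- extreme maximal cliques through each vertex
  have hLoE : ∀ u : V, ∃ C : Set V, (MaximalClique G C ∧ u ∈ C) ∧
      ∀ D, MaximalClique G D → u ∈ D → le (pt C) (pt D) := by
    intro u
    obtain ⟨C0, hC0, hu0⟩ := extend {u} (SimpleGraph.isClique_singleton u)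
    obtain ⟨C, hC, hmin⟩ := set_exists_min le hto htr {D : Set V | MaximalClique G D ∧ u ∈ D}
      pt (Set.toFinite _) ⟨C0, hC0, hu0 rfl⟩
    exact ⟨C, hC, fun D h1 h2 => hmin D ⟨h1, h2⟩⟩
  have hHiE : ∀ u : V, ∃ C : Set V, (MaximalClique G C ∧ u ∈ C) ∧
      ∀ D, MaximalClique G D → u ∈ D → le (pt D) (pt C) := by
    intro u
    obtain ⟨C0, hC0, hu0⟩ := extend {u} (SimpleGraph.isClique_singleton u)
    obtain ⟨C, hC, hmax⟩ := set_exists_max le hto htr {D : Set V | MaximalClique G D ∧ u ∈ D}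
      pt (Set.toFinite _) ⟨C0, hC0, hu0 rfl⟩
    exact ⟨C, hC, fun D h1 h2 => hmax D ⟨h1, h2⟩⟩
  choose Lo hLo using hLoE
  choose Hi hHi using hHiE
  have hLoM : ∀ u, MaximalClique G (Lo u) := fun u => (hLo u).1.1
  have hLomem : ∀ u, u ∈ Lo u := fun u => (hLo u).1.2
  have hLomin : ∀ u D, MaximalClique G D → u ∈ D → le (pt (Lo u)) (pt D) := fun u => (hLo u).2
  have hHiM : ∀ u, MaximalClique G (Hi u) := fun u => (hHi u).1.1
  have hHimem : ∀ u, u ∈ Hi u := fun u => (hHi u).1.2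
  have hHimax : ∀ u D, MaximalClique G D → u ∈ D → le (pt D) (pt (Hi u)) := fun u => (hHi u).2
  have hbd : ∀ (u : V) (C : Set V), MaximalClique G C → u ∈ C →
      le (l u) (pt C) ∧ le (pt C) (r u) := fun u C hC hu => hpt C hC.1 u hu
  have hab : ∀ u : V, le (pt (Lo u)) (pt (Hi u)) :=
    fun u => hLomin u (Hi u) (hHiM u) (hHimem u)
  have mem_iff : ∀ (u : V) (C : Set V), MaximalClique G C →
      (u ∈ C ↔ le (pt (Lo u)) (pt C) ∧ le (pt C) (pt (Hi u))) := by
    intro u C hC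
    constructor
    · exact fun hu => ⟨hLomin u C hC hu, hHimax u C hC hu⟩
    · rintro ⟨h1, h2⟩
      have key : ∀ b ∈ C, u ≠ b → G.Adj u b := by
        intro b hb hub
        refine (hadjL u b hub).mpr ⟨?_, ?_⟩
        · exact htr (htr (hbd u (Lo u) (hLoM u) (hLomem u)).1 h1) (hbd b C hC hb).2
        · exact htr (htr (hbd b C hC hb).1 h2) (hbd u (Hi u) (hHiM u) (hHimem u)).2
      have hclq : G.IsClique (insert u C) := hC.1.insert key
      have := hC.2 (insert u C) hclq (Set.subset_insert u C)
      exact this ▸ Set.mem_insert u C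
  have adj_iff : ∀ u v : V, u ≠ v →
      (G.Adj u v ↔ le (pt (Lo v)) (pt (Hi u)) ∧ le (pt (Lo u)) (pt (Hi v))) := by
    intro u v hne
    constructor
    · intro h
      obtain ⟨C, hC, hsub⟩ := extend {u, v} (SimpleGraph.isClique_pair.mpr fun _ => h)
      have hu : u ∈ C := hsub (by simp)
      have hv : v ∈ C := hsub (by simp)
      exact ⟨htr (hLomin v C hC hv) (hHimax u C hC hu),
        htr (hLomin u C hC hu) (hHimax v C hC hv)⟩
    · rintro ⟨h1, h2⟩
      rcases hto (pt (Lo u)) (pt (Lo v)) with h | h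
      · have hu : u ∈ Lo v := (mem_iff u (Lo v) (hLoM v)).mpr ⟨h, h1⟩
        exact (hLoM v).1 hu (hLomem v) hne
      · have hv : v ∈ Lo u := (mem_iff v (Lo u) (hLoM u)).mpr ⟨h, h2⟩
        exact (hLoM u).1 (hLomem u) hv hne
  refine ⟨lex3 le (fun u => pt (Lo u)) (fun u => pt (Hi u))
      (fun v => ((Fintype.equivFin V) v : ℕ)),
    lex3_isLinearOrder le hlinL _ _ _
      (fun a b h => (Fintype.equivFin V).injective (Fin.val_injective h)), ?_⟩
  intro u v w huv hvw hadj
  by_cases h1 : v = u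
  · exact Or.inl h1
  by_cases h2 : v = w
  · exact Or.inr (Or.inl h2)
  have hfa_uv := lex3_le_f hlinL huv
  have hfa_vw := lex3_le_f hlinL hvw
  obtain ⟨hA, hB⟩ := (adj_iff u w hadj.ne).mp hadj
  have hAuv : G.Adj u v := (adj_iff u v (fun hh => h1 hh.symm)).mpr
    ⟨htr hfa_vw hA, htr hfa_uv (hab v)⟩
  refine Or.inr (Or.inr ⟨hAuv, ?_⟩)
  by_contra hnadj
  have hvwHW : le (pt (Lo v)) (pt (Hi w)) := htr hfa_vw (hab w)
  have hnle : ¬ le (pt (Lo w)) (pt (Hi v)) :=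
    fun hc => hnadj ((adj_iff v w h2).mpr ⟨hc, hvwHW⟩)
  have hlt1 : le (pt (Hi v)) (pt (Lo w)) :=
    (hto (pt (Lo w)) (pt (Hi v))).resolve_left hnle
  have hflt : le (pt (Lo u)) (pt (Lo v)) ∧ pt (Lo u) ≠ pt (Lo v) := by
    simp only [lex3] at huv
    rcases huv with h | ⟨hfeq, h⟩
    · exact h
    · exfalso
      rcases h with h | ⟨hgeq, -⟩
      · have hvu : le (pt (Hi v)) (pt (Hi u)) := htr hlt1 hA
        exact h.2 (han h.1 hvu)
      · exact hnle (hgeq ▸ hA)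
  have hLone : ¬ (Lo u ⊆ Lo v) := by
    intro hsub
    have heq := (hLoM u).2 (Lo v) (hLoM v).1 hsub
    exact hflt.2 (congrArg pt heq).symm
  obtain ⟨x, hxLou, hxnLov⟩ := Set.not_subset.mp hLone
  have hax : le (pt (Lo x)) (pt (Lo u)) := hLomin x (Lo u) (hLoM u) hxLou
  have hnbx : ¬ le (pt (Lo v)) (pt (Hi x)) := by
    intro hc
    exact hxnLov ((mem_iff x (Lo v) (hLoM v)).mpr ⟨htr hax hflt.1, hc⟩)
  have hbxlt : le (pt (Hi x)) (pt (Lo v)) :=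
    (hto (pt (Lo v)) (pt (Hi x))).resolve_left hnbx
  have huLov : u ∈ Lo v := (mem_iff u (Lo v) (hLoM v)).mpr ⟨hflt.1, htr hfa_vw hA⟩
  have hux : u ≠ x := fun hh => hxnLov (hh ▸ huLov)
  have hAux : G.Adj u x := (hLoM u).1 (hLomem u) hxLou hux
  have hxv : x ≠ v := fun hh => hnbx (by rw [hh]; exact hab v)
  have hxw : x ≠ w := fun hh => hnbx (by rw [hh]; exact hvwHW)
  have hnxv : ¬ G.Adj x v := fun hc => hnbx ((adj_iff x v hxv).mp hc).1
  have hnxw : ¬ G.Adj x w :=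
    fun hc => hnle (htr (htr ((adj_iff x w hxw).mp hc).1 hbxlt) (hab v))
  have hnvw : ¬ G.Adj v w := fun hc => hnle ((adj_iff v w h2).mp hc).1
  exact hcf u x v w hxv hxw h2 hAux hAuv hadj hnxv hnxw hnvw

end UmbrellaConsequences

/-- A graph is a half-square of a biconvex bipartite graph iff it is a unit interval
graph; in particular, for a unit interval graph `G` the vertex-clique incidence
bipartite graph of `G` is biconvex (both classes admit linear orders in which all
neighborhoods are intervals). -/
theorem stmt_16 {V : Type} [Fintype V] (G : SimpleGraph V) :
    (IsHalfSquareOfBiconvex G ↔ IsUnitIntervalGraph G) ∧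
    (IsUnitIntervalGraph G →
      ∃ (leV : V → V → Prop)
        (leC : {C : Set V // MaximalClique G C} → {C : Set V // MaximalClique G C} → Prop),
        ConvexIn leV (fun (v : V) (C : {C : Set V // MaximalClique G C}) => v ∈ C.val) ∧
        ConvexIn leC
          (Function.swap (fun (v : V) (C : {C : Set V // MaximalClique G C}) => v ∈ C.val))) := by
  constructor
  · constructor
    · intro h
      obtain ⟨le, hlin, hum⟩ := halfSquare_to_umbrella h
      exact ⟨umbrella_intervalGraph hlin hum, umbrella_clawFree hlin hum⟩
    · rintro ⟨hint, hcf⟩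
      obtain ⟨le, hlin, hum⟩ := unit_to_umbrella hint hcf
      exact umbrella_halfSquare hlin hum
  · rintro ⟨hint, hcf⟩
    obtain ⟨le, hlin, hum⟩ := unit_to_umbrella hint hcf
    exact umbrella_part3 hlin hum
end
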